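/- Let α be irrational and suppose there exist b > 1, ε > 0, and infinitely many positive integers q with ‖αq‖ < q·b^{−q·(ln q)^{1+ε}} (where ‖·‖ is distance to nearest integer). Let ρ ∈ (0,1) be such that there exists C > 0 with ‖αρ + jα‖ > C·j^{−ln ln(1+j)} for all j ≥ 1, and ‖αρ‖ > 0. Then for every x > 0 the sequence a_{0,n}·x^n is unbounded, where a_{0,n} = (sin(πρ)/π) · (Γ(ρ+n)/Γ(αρ+αn)) · ∏_{j=1}^{n} sin(πα(ρ+j−1)) / ∏_{i=1}^{n} sin(παi) in absolute value. In particular the series ∑_{n≥0} a_{0,n} x^n does not converge absolutely. -/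

import Mathlib

open Real Finset

/-- Distance from a real number to the nearest integer. -/
noncomputable def distNearestInt (x : ℝ) : ℝ := ⨅ n : ℤ, |x - (n : ℝ)|

lemma distNearestInt_eq (x : ℝ) : distNearestInt x = |x - round x| := by
  unfold distNearestInt
  apply le_antisymm
  · exact ciInf_le ⟨0, fun y ⟨n, hn⟩ => hn ▸ abs_nonneg _⟩ (round x)
  · exact le_ciInf fun n => round_le x n

lemma abs_sin_round (x : ℝ) : |Real.sin (π * x)| = |Real.sin (π * (x - round x))| := by
  have h : Real.sin (π * x) = (-1) ^ (round x) * Real.sin (π * (x - round x)) := by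
    rw [show π * x = π * (x - round x) + (round x) * π by ring, Real.sin_add_int_mul_pi]
  rw [h, abs_mul]
  have h1 : |(-1:ℝ) ^ round x| = 1 := by
    rcases Int.even_or_odd (round x) with he | he
    · rw [he.neg_one_zpow]; simp
    · rw [Odd.neg_one_zpow he]; simp
  rw [h1, one_mul]

lemma abs_sin_pi_le (x : ℝ) : |Real.sin (π * x)| ≤ π * distNearestInt x := by
  rw [distNearestInt_eq, abs_sin_round]
  calc |Real.sin (π * (x - round x))| ≤ |π * (x - round x)| := Real.abs_sin_le_abs
    _ = π * |x - round x| := by rw [abs_mul, abs_of_pos Real.pi_pos]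

lemma two_dist_le_abs_sin_pi (x : ℝ) : 2 * distNearestInt x ≤ |Real.sin (π * x)| := by
  rw [distNearestInt_eq, abs_sin_round]
  set d := x - round x with hd
  have hhalf : |d| ≤ 1 / 2 := abs_sub_round x
  have key : ∀ t : ℝ, 0 ≤ t → t ≤ 1 / 2 → 2 * t ≤ |Real.sin (π * t)| := by
    intro t ht ht'
    have h2 : π * t ≤ π / 2 := by nlinarith [Real.pi_pos]
    have h3 : (0:ℝ) ≤ π * t := by positivity
    have h4 := Real.mul_le_sin h3 h2
    have hsin : 0 ≤ Real.sin (π * t) := le_trans (by positivity) h4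
    rw [abs_of_nonneg hsin]
    have hπ := Real.pi_pos
    calc 2 * t = 2 / π * (π * t) := by field_simp
      _ ≤ Real.sin (π * t) := h4
  rcases le_or_gt 0 d with hd0 | hd0
  · have := key d hd0 ((le_abs_self d).trans hhalf)
    rwa [abs_of_nonneg hd0]
  · have h5 := key (-d) (by linarith) ((neg_le_abs d).trans hhalf)
    rw [show π * -d = -(π * d) by ring, Real.sin_neg, abs_neg] at h5
    rw [abs_of_neg hd0]; linarith

lemma distNearestInt_pos_of_irrational {x : ℝ} (h : Irrational x) :
    0 < distNearestInt x := by
  rw [distNearestInt_eq]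
  exact abs_pos.mpr (sub_ne_zero.mpr (h.ne_int _))

lemma sin_pi_ne_zero_of_dist_pos {x : ℝ} (h : 0 < distNearestInt x) :
    Real.sin (π * x) ≠ 0 := by
  have := two_dist_le_abs_sin_pi x
  intro hs; rw [hs] at this; simp at this; linarith

lemma gamma_ratio_lb {α ρ : ℝ} (hα1 : 1 < α) (hα2 : α < 2) (hρ0 : 0 < ρ) (hρ1 : ρ < 1)
    {n : ℕ} (hn : 2 ≤ n) :
    Real.exp (-((2*(n:ℝ)+1) * Real.log (2*(n:ℝ)+1))) ≤
      Real.Gamma (ρ + n) / Real.Gamma (α*ρ + α*n) := by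
  have hn2 : (2:ℝ) ≤ (n:ℝ) := by exact_mod_cast hn
  have hmono := Real.Gamma_strictMonoOn_Ici.monotoneOn
  have hnum : 1 ≤ Real.Gamma (ρ + n) := by
    have := hmono (Set.mem_Ici.mpr le_rfl) (Set.mem_Ici.mpr (by linarith : (2:ℝ) ≤ ρ + n))
      (by linarith)
    rwa [Real.Gamma_two] at this
  have hden_pos : 0 < Real.Gamma (α*ρ + α*n) := Real.Gamma_pos_of_pos (by nlinarith)
  have hle : α*ρ + α*n ≤ ((2*n+1 : ℕ) : ℝ) + 1 := by push_cast; nlinarith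
  have hden : Real.Gamma (α*ρ + α*n) ≤ ((Nat.factorial (2*n+1) : ℕ) : ℝ) := by
    have h1 := hmono (Set.mem_Ici.mpr (by nlinarith : (2:ℝ) ≤ α*ρ + α*n))
      (Set.mem_Ici.mpr (by push_cast; nlinarith : (2:ℝ) ≤ ((2*n+1 : ℕ) : ℝ) + 1)) hle
    rwa [Real.Gamma_nat_eq_factorial] at h1
  have hfact : ((Nat.factorial (2*n+1) : ℕ) : ℝ) ≤ ((2*n+1 : ℕ) : ℝ) ^ (2*n+1 : ℕ) := by
    have := Nat.factorial_le_pow (2*n+1)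
    exact_mod_cast this
  have hbase : (0:ℝ) < ((2*n+1 : ℕ) : ℝ) := by positivity
  have hpow : ((2*n+1 : ℕ) : ℝ) ^ (2*n+1 : ℕ) = Real.exp ((2*(n:ℝ)+1) * Real.log (2*(n:ℝ)+1)) := by
    rw [← Real.exp_log (show (0:ℝ) < ((2*n+1 : ℕ) : ℝ) ^ (2*n+1 : ℕ) by positivity),
      Real.log_pow]
    push_cast; ring_nf
  have hden' : Real.Gamma (α*ρ + α*n) ≤ Real.exp ((2*(n:ℝ)+1) * Real.log (2*(n:ℝ)+1)) := by
    rw [← hpow]; exact hden.trans hfact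
  rw [Real.exp_neg]
  calc (Real.exp ((2*(n:ℝ)+1) * Real.log (2*(n:ℝ)+1)))⁻¹
      = 1 / Real.exp ((2*(n:ℝ)+1) * Real.log (2*(n:ℝ)+1)) := (one_div _).symm
    _ ≤ Real.Gamma (ρ + n) / Real.Gamma (α*ρ + α*n) :=
        div_le_div₀ (by linarith) hnum hden_pos hden'

/-- The absolute value of the coefficient `a_{0,n}` from the series representation
of the density of the supremum of a stable process. -/
noncomputable def absA (α ρ : ℝ) (n : ℕ) : ℝ :=
  Real.sin (π * ρ) / π * (Real.Gamma (ρ + n) / Real.Gamma (α * ρ + α * n))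
    * |∏ j ∈ Finset.Icc 1 n, Real.sin (π * α * (ρ + j - 1))|
    / |∏ i ∈ Finset.Icc 1 n, Real.sin (π * α * i)|

noncomputable def Eaux (b ε C x : ℝ) (q : ℕ) : ℝ :=
  -((2*(q:ℝ)+1) * Real.log (2*(q:ℝ)+1))
  + ((q:ℝ)-1) * (Real.log (min 1 (2*C)) - Real.log (Real.log (1+(q:ℝ))) * Real.log q)
  + (q:ℝ) * Real.log x
  + Real.log b * ((q:ℝ) * Real.log (q:ℝ) ^ (1+ε))
  - Real.log (q:ℝ)

lemma one_le_log_aux {q : ℕ} (hq : 3 ≤ q) : 1 ≤ Real.log (1 + (q:ℝ)) := by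
  have hq3 : (3:ℝ) ≤ (q:ℝ) := by exact_mod_cast hq
  rw [Real.le_log_iff_exp_le (by linarith)]
  have := Real.exp_one_lt_d9
  linarith

lemma rpow_dist_aux {k q : ℕ} (hk : 1 ≤ k) (hkq : k ≤ q) (hq : 3 ≤ q) :
    (q:ℝ) ^ (-(Real.log (Real.log (1+(q:ℝ))))) ≤
      (k:ℝ) ^ (-(Real.log (Real.log (1+(k:ℝ))))) := by
  have hk1 : (1:ℝ) ≤ (k:ℝ) := by exact_mod_cast hk
  have hq1 : (1:ℝ) ≤ (q:ℝ) := by exact_mod_cast hq.trans' (by norm_num)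
  have hkq' : (k:ℝ) ≤ (q:ℝ) := by exact_mod_cast hkq
  have hL : 0 ≤ Real.log (Real.log (1+(q:ℝ))) :=
    Real.log_nonneg (one_le_log_aux hq)
  have hmain : (k:ℝ) ^ (Real.log (Real.log (1+(k:ℝ)))) ≤
      (q:ℝ) ^ (Real.log (Real.log (1+(q:ℝ)))) := by
    rcases le_or_gt (Real.log (Real.log (1+(k:ℝ)))) 0 with he | he
    · calc (k:ℝ) ^ (Real.log (Real.log (1+(k:ℝ)))) ≤ (k:ℝ) ^ (0:ℝ) :=
            Real.rpow_le_rpow_of_exponent_le hk1 he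
        _ = 1 := Real.rpow_zero _
        _ ≤ (q:ℝ) ^ (Real.log (Real.log (1+(q:ℝ)))) := Real.one_le_rpow hq1 hL
    · have hek : Real.log (Real.log (1+(k:ℝ))) ≤ Real.log (Real.log (1+(q:ℝ))) := by
        apply Real.log_le_log
        · have : (0:ℝ) < Real.log (1+(k:ℝ)) := by
            apply Real.log_pos; linarith
          exact this
        · apply Real.log_le_log (by linarith); linarith
      calc (k:ℝ) ^ (Real.log (Real.log (1+(k:ℝ)))) ≤
            (q:ℝ) ^ (Real.log (Real.log (1+(k:ℝ)))) :=
            Real.rpow_le_rpow (by linarith) hkq' he.le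
        _ ≤ (q:ℝ) ^ (Real.log (Real.log (1+(q:ℝ)))) :=
            Real.rpow_le_rpow_of_exponent_le hq1 hek
  rw [Real.rpow_neg (by linarith), Real.rpow_neg (by linarith)]
  exact inv_anti₀ (Real.rpow_pos_of_pos (by linarith) _) hmain

lemma key_bound {α ρ b ε C x : ℝ} (hα1 : 1 < α) (hα2 : α < 2) (hirr : Irrational α)
    (hb : 1 < b) (hρ0 : 0 < ρ) (hρ1 : ρ < 1) (hC : 0 < C)
    (hj : ∀ j : ℕ, 1 ≤ j →
        distNearestInt (α * ρ + j * α) > C * (j : ℝ) ^ (-Real.log (Real.log (1 + j))))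
    (h0 : 0 < distNearestInt (α * ρ)) (hx : 0 < x)
    {q : ℕ} (hq3 : 3 ≤ q)
    (hqd : distNearestInt (α * q) < q * b ^ (-(q : ℝ) * Real.log q ^ (1 + ε))) :
    Real.sin (π*ρ)/π * |Real.sin (π*(α*ρ))| / π * Real.exp (Eaux b ε C x q) ≤
      absA α ρ q * x ^ q := by
  have hπ := Real.pi_pos
  have hq0 : (0:ℝ) < (q:ℝ) := by positivity
  have hq1 : (1:ℝ) ≤ (q:ℝ) := by exact_mod_cast hq3.trans' (by norm_num)
  have hb0 : (0:ℝ) < b := by linarith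
  set c1 : ℝ := min 1 (2*C) with hc1def
  have hc1 : 0 < c1 := lt_min one_pos (by linarith)
  have hc1' : c1 ≤ 2*C := min_le_right _ _
  set L : ℝ := Real.log (Real.log (1+(q:ℝ))) with hLdef
  -- constants
  have hS : 0 < Real.sin (π*ρ)/π := by
    apply div_pos _ hπ
    apply Real.sin_pos_of_pos_of_lt_pi (by positivity) (by nlinarith)
  have hc0 : 0 < |Real.sin (π*(α*ρ))| := by
    rw [abs_pos]; exact sin_pi_ne_zero_of_dist_pos h0
  -- Gamma ratio bound
  have hG := gamma_ratio_lb hα1 hα2 hρ0 hρ1 (show 2 ≤ q by omega)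
  have hGpos : 0 < Real.Gamma (ρ + q) / Real.Gamma (α*ρ + α*q) :=
    lt_of_lt_of_le (Real.exp_pos _) hG
  -- numerator product bound
  have habs : ∀ j : ℕ, j ∈ Finset.Ioc 1 q →
      c1 * (q:ℝ) ^ (-L) ≤ |Real.sin (π * α * (ρ + (j:ℕ) - 1))| := by
    intro j hjm
    rw [Finset.mem_Ioc] at hjm
    obtain ⟨hj1, hjq⟩ := hjm
    set k : ℕ := j - 1 with hkdef
    have hk1 : 1 ≤ k := by omega
    have hkq : k ≤ q := by omega
    have hkc : (k:ℝ) = (j:ℝ) - 1 := by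
      rw [hkdef]; push_cast [Nat.cast_sub (by omega : 1 ≤ j)]; ring
    have harg : π * α * (ρ + (j:ℝ) - 1) = π * (α * ρ + (k:ℝ) * α) := by
      rw [hkc]; ring
    have hdist := hj k hk1
    have hrp := rpow_dist_aux hk1 hkq hq3
    have hrp0 : (0:ℝ) < (q:ℝ) ^ (-L) := Real.rpow_pos_of_pos hq0 _
    calc c1 * (q:ℝ) ^ (-L) ≤ (2*C) * ((k:ℝ) ^ (-(Real.log (Real.log (1+(k:ℝ)))))) := by
          apply mul_le_mul hc1' hrp hrp0.le (by linarith)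
      _ = 2 * (C * (k:ℝ) ^ (-(Real.log (Real.log (1+(k:ℝ)))))) := by ring
      _ ≤ 2 * distNearestInt (α * ρ + k * α) := by
          apply mul_le_mul_of_nonneg_left (le_of_lt hdist) (by norm_num)
      _ ≤ |Real.sin (π * (α * ρ + (k:ℝ) * α))| := two_dist_le_abs_sin_pi _
      _ = |Real.sin (π * α * (ρ + (j:ℝ) - 1))| := by rw [harg]
  have hPsplit : |∏ j ∈ Finset.Icc 1 q, Real.sin (π * α * (ρ + (j:ℕ) - 1))| =
      |Real.sin (π*(α*ρ))| * ∏ j ∈ Finset.Ioc 1 q, |Real.sin (π * α * (ρ + (j:ℕ) - 1))| := by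
    rw [Finset.abs_prod]
    rw [← Finset.Icc_erase_left 1 q, ← Finset.mul_prod_erase _ _
      (Finset.mem_Icc.mpr ⟨le_refl 1, by omega⟩)]
    congr 2
    push_cast; ring_nf
  have hcard : (Finset.Ioc 1 q).card = q - 1 := Nat.card_Ioc 1 q
  have hPprod : (c1 * (q:ℝ) ^ (-L)) ^ (q - 1 : ℕ) ≤
      ∏ j ∈ Finset.Ioc 1 q, |Real.sin (π * α * (ρ + (j:ℕ) - 1))| := by
    rw [← hcard, ← Finset.prod_const]
    exact Finset.prod_le_prod (fun i _ => by positivity) habs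
  have hexp2 : (c1 * (q:ℝ) ^ (-L)) ^ (q - 1 : ℕ) =
      Real.exp (((q:ℝ)-1) * (Real.log c1 - L * Real.log q)) := by
    have h1 : c1 * (q:ℝ) ^ (-L) = Real.exp (Real.log c1 - L * Real.log q) := by
      rw [Real.rpow_def_of_pos hq0, show Real.log c1 - L * Real.log q =
        Real.log c1 + Real.log (q:ℝ) * (-L) by ring, Real.exp_add, Real.exp_log hc1]
    rw [h1, ← Real.exp_nat_mul]
    congr 1
    rw [Nat.cast_sub (by omega : 1 ≤ q)]
    push_cast; ring
  have hP : |Real.sin (π*(α*ρ))| * Real.exp (((q:ℝ)-1) * (Real.log c1 - L * Real.log q)) ≤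
      |∏ j ∈ Finset.Icc 1 q, Real.sin (π * α * (ρ + (j:ℕ) - 1))| := by
    rw [hPsplit, ← hexp2]
    exact mul_le_mul_of_nonneg_left hPprod hc0.le
  -- denominator bound
  have hsin_ne : ∀ i : ℕ, i ∈ Finset.Icc 1 q → Real.sin (π * α * i) ≠ 0 := by
    intro i him
    rw [Finset.mem_Icc] at him
    have : Irrational (α * i) := hirr.mul_natCast (by omega)
    have hd := distNearestInt_pos_of_irrational this
    have := sin_pi_ne_zero_of_dist_pos hd
    rwa [show π * (α * i) = π * α * i by ring] at this
  have hDpos : 0 < |∏ i ∈ Finset.Icc 1 q, Real.sin (π * α * i)| := by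
    rw [abs_pos]
    exact Finset.prod_ne_zero_iff.mpr hsin_ne
  have hDle : |∏ i ∈ Finset.Icc 1 q, Real.sin (π * α * i)| ≤ |Real.sin (π * (α * q))| := by
    rw [Finset.abs_prod, ← Finset.mul_prod_erase _ _
      (Finset.mem_Icc.mpr ⟨by omega, le_refl q⟩ : q ∈ Finset.Icc 1 q)]
    have h1 : ∏ i ∈ (Finset.Icc 1 q).erase q, |Real.sin (π * α * i)| ≤ 1 :=
      Finset.prod_le_one (fun i _ => abs_nonneg _) (fun i _ => Real.abs_sin_le_one _)
    calc |Real.sin (π * α * q)| * ∏ i ∈ (Finset.Icc 1 q).erase q, |Real.sin (π * α * i)|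
        ≤ |Real.sin (π * α * q)| * 1 := mul_le_mul_of_nonneg_left h1 (abs_nonneg _)
      _ = |Real.sin (π * (α * q))| := by rw [mul_one]; congr 1; ring
  have hDub : |∏ i ∈ Finset.Icc 1 q, Real.sin (π * α * i)| ≤
      π * ((q:ℝ) * Real.exp (Real.log b * (-(q : ℝ) * Real.log q ^ (1 + ε)))) := by
    refine hDle.trans ((abs_sin_pi_le _).trans ?_)
    have : distNearestInt (α * q) ≤ (q:ℝ) * b ^ (-(q : ℝ) * Real.log q ^ (1 + ε)) :=
      le_of_lt hqd
    calc π * distNearestInt (α * q) ≤ π * ((q:ℝ) * b ^ (-(q : ℝ) * Real.log q ^ (1 + ε))) :=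
          mul_le_mul_of_nonneg_left this hπ.le
      _ = π * ((q:ℝ) * Real.exp (Real.log b * (-(q : ℝ) * Real.log q ^ (1 + ε)))) := by
          rw [Real.rpow_def_of_pos hb0]
  -- combine
  have hxq : x ^ q = Real.exp ((q:ℝ) * Real.log x) := by
    rw [Real.exp_nat_mul, Real.exp_log hx]
  have hnum : Real.sin (π*ρ)/π * Real.exp (-((2*(q:ℝ)+1) * Real.log (2*(q:ℝ)+1)))
      * (|Real.sin (π*(α*ρ))| * Real.exp (((q:ℝ)-1) * (Real.log c1 - L * Real.log q)))
      * Real.exp ((q:ℝ) * Real.log x) ≤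
      Real.sin (π * ρ) / π * (Real.Gamma (ρ + q) / Real.Gamma (α * ρ + α * q))
      * |∏ j ∈ Finset.Icc 1 q, Real.sin (π * α * (ρ + (j:ℕ) - 1))| * x ^ q := by
    rw [hxq]
    have h1 : Real.sin (π*ρ)/π * Real.exp (-((2*(q:ℝ)+1) * Real.log (2*(q:ℝ)+1))) ≤
        Real.sin (π * ρ) / π * (Real.Gamma (ρ + q) / Real.Gamma (α * ρ + α * q)) :=
      mul_le_mul_of_nonneg_left hG hS.le
    have h2 := mul_le_mul h1 hP (by positivity) (by positivity)
    exact mul_le_mul_of_nonneg_right h2 (Real.exp_pos _).le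
  have hfinal : Real.sin (π*ρ)/π * Real.exp (-((2*(q:ℝ)+1) * Real.log (2*(q:ℝ)+1)))
      * (|Real.sin (π*(α*ρ))| * Real.exp (((q:ℝ)-1) * (Real.log c1 - L * Real.log q)))
      * Real.exp ((q:ℝ) * Real.log x)
      / (π * ((q:ℝ) * Real.exp (Real.log b * (-(q : ℝ) * Real.log q ^ (1 + ε))))) ≤
      absA α ρ q * x ^ q := by
    calc _ ≤ Real.sin (π * ρ) / π * (Real.Gamma (ρ + q) / Real.Gamma (α * ρ + α * q))
          * |∏ j ∈ Finset.Icc 1 q, Real.sin (π * α * (ρ + (j:ℕ) - 1))| * x ^ q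
          / |∏ i ∈ Finset.Icc 1 q, Real.sin (π * α * i)| :=
        div_le_div₀ (by positivity) hnum hDpos hDub
      _ = absA α ρ q * x ^ q := by unfold absA; ring
  refine le_trans (le_of_eq ?_) hfinal
  rw [show Eaux b ε C x q = -((2*(q:ℝ)+1) * Real.log (2*(q:ℝ)+1))
    + (((q:ℝ)-1) * (Real.log c1 - L * Real.log q)) + ((q:ℝ) * Real.log x)
    + (-(Real.log b * (-(q : ℝ) * Real.log (q:ℝ) ^ (1 + ε)))) + (-(Real.log (q:ℝ))) from by
      unfold Eaux; rw [hc1def, hLdef]; ring]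
  rw [Real.exp_add, Real.exp_add, Real.exp_add, Real.exp_add, Real.exp_neg, Real.exp_neg,
    Real.exp_neg, Real.exp_log hq0]
  field_simp

open Filter in
lemma Eaux_tendsto (b ε C x : ℝ) (hb : 1 < b) (hε : 0 < ε) (hC : 0 < C) :
    Tendsto (Eaux b ε C x) atTop atTop := by
  have hlb : 0 < Real.log b := Real.log_pos hb
  set c2 : ℝ := Real.log (min 1 (2*C)) + Real.log x with hc2
  set F : ℕ → ℝ := fun q => Real.log b * Real.log (q:ℝ) ^ (1+ε)
    - Real.log (Real.log (1+(q:ℝ))) * Real.log (q:ℝ)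
    - 3 * Real.log (2*(q:ℝ)+1) - Real.log (q:ℝ) + c2 with hF
  set Hc : ℝ → ℝ := fun t => Real.log b * t^(1+ε) - (Real.log 2 + Real.log t) * t
    - 7*t + c2 with hHc
  -- Step D : Hc tendsto atTop
  have hHctop : Tendsto Hc atTop atTop := by
    set I : ℝ → ℝ := fun t => Real.log b * t^ε - Real.log t - (Real.log 2 + 7) with hI
    have hItop : Tendsto I atTop atTop := by
      have h1 : Tendsto (fun t : ℝ => Real.log t / t^ε) atTop (nhds 0) :=
        (isLittleO_log_rpow_atTop hε).tendsto_div_nhds_zero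
      have h2 : Tendsto (fun t : ℝ => (Real.log 2 + 7) / t^ε) atTop (nhds 0) :=
        tendsto_const_nhds.div_atTop (tendsto_rpow_atTop hε)
      have h3 : Tendsto (fun t : ℝ => Real.log b - Real.log t / t^ε
          - (Real.log 2 + 7) / t^ε) atTop (nhds (Real.log b - 0 - 0)) :=
        (tendsto_const_nhds.sub h1).sub h2
      rw [sub_zero, sub_zero] at h3
      have h4 := (tendsto_rpow_atTop hε).atTop_mul_pos hlb h3
      apply h4.congr'
      filter_upwards [eventually_gt_atTop (0:ℝ)] with t ht
      have hne : t ^ ε ≠ 0 := ne_of_gt (Real.rpow_pos_of_pos ht ε)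
      field_simp [hI]
      rw [hI]; ring
    have hJ : Tendsto (fun t : ℝ => t * I t + c2) atTop atTop :=
      tendsto_atTop_add_const_right _ _ (tendsto_id.atTop_mul_atTop₀ hItop)
    apply hJ.congr'
    filter_upwards [eventually_gt_atTop (0:ℝ)] with t ht
    rw [hHc, hI]
    simp only
    rw [show (1+ε) = 1 + ε from rfl, Real.rpow_add ht, Real.rpow_one]
    ring
  -- Step C : F tendsto atTop
  have hFtop : Tendsto F atTop atTop := by
    have hcomp : Tendsto (fun q : ℕ => Hc (Real.log (q:ℝ))) atTop atTop :=
      hHctop.comp (Real.tendsto_log_atTop.comp tendsto_natCast_atTop_atTop)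
    apply tendsto_atTop_mono' atTop _ hcomp
    filter_upwards [eventually_ge_atTop 3] with q hq3
    have hq3' : (3:ℝ) ≤ (q:ℝ) := by exact_mod_cast hq3
    have hlq : 1 ≤ Real.log (q:ℝ) := by
      rw [Real.le_log_iff_exp_le (by linarith)]
      have := Real.exp_one_lt_d9; linarith
    have hlq0 : 0 < Real.log (q:ℝ) := by linarith
    have hL1 : Real.log (1+(q:ℝ)) ≤ 2 * Real.log (q:ℝ) := by
      rw [show 2 * Real.log (q:ℝ) = Real.log ((q:ℝ)^2) by
        rw [Real.log_pow]; push_cast; ring]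
      apply Real.log_le_log (by linarith)
      nlinarith
    have hL : Real.log (Real.log (1+(q:ℝ))) ≤ Real.log 2 + Real.log (Real.log (q:ℝ)) := by
      rw [← Real.log_mul (by norm_num) (ne_of_gt hlq0)]
      apply Real.log_le_log (by linarith [one_le_log_aux hq3])
      linarith
    have hA : Real.log (2*(q:ℝ)+1) ≤ 2 * Real.log (q:ℝ) := by
      rw [show 2 * Real.log (q:ℝ) = Real.log ((q:ℝ)^2) by
        rw [Real.log_pow]; push_cast; ring]
      apply Real.log_le_log (by linarith)
      nlinarith
    rw [hF, hHc]
    simp only [Function.comp_apply]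
    have hmul1 : Real.log (Real.log (1+(q:ℝ))) * Real.log (q:ℝ) ≤
        (Real.log 2 + Real.log (Real.log (q:ℝ))) * Real.log (q:ℝ) :=
      mul_le_mul_of_nonneg_right hL hlq0.le
    nlinarith
  -- Step B
  have hqF : Tendsto (fun q : ℕ => (q:ℝ) * F q) atTop atTop :=
    tendsto_natCast_atTop_atTop.atTop_mul_atTop₀ hFtop
  -- Step A
  apply tendsto_atTop_mono' atTop _ hqF
  filter_upwards [eventually_ge_atTop 3] with q hq3
  have hq3' : (3:ℝ) ≤ (q:ℝ) := by exact_mod_cast hq3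
  have hlq : 1 ≤ Real.log (q:ℝ) := by
    rw [Real.le_log_iff_exp_le (by linarith)]
    have := Real.exp_one_lt_d9; linarith
  have hA0 : 0 ≤ Real.log (2*(q:ℝ)+1) := Real.log_nonneg (by linarith)
  have hL0 : 0 ≤ Real.log (Real.log (1+(q:ℝ))) := Real.log_nonneg (one_le_log_aux hq3)
  have hlc : Real.log (min 1 (2*C)) ≤ 0 :=
    Real.log_nonpos (le_min (by norm_num) (by linarith)) (min_le_left _ _)
  have expand : Eaux b ε C x q - (q:ℝ) * F q =
      ((q:ℝ)-1) * Real.log (2*(q:ℝ)+1)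
      + (Real.log (Real.log (1+(q:ℝ))) * Real.log (q:ℝ) - Real.log (min 1 (2*C)))
      + ((q:ℝ)-1) * Real.log (q:ℝ) := by
    rw [hF]; unfold Eaux; rw [hc2]; ring
  nlinarith [mul_nonneg hL0 (by linarith : (0:ℝ) ≤ Real.log (q:ℝ)),
    mul_nonneg (by linarith : (0:ℝ) ≤ (q:ℝ)-1) hA0,
    mul_nonneg (by linarith : (0:ℝ) ≤ (q:ℝ)-1) (by linarith : (0:ℝ) ≤ Real.log (q:ℝ))]

theorem series_not_absolutely_convergent (α ρ : ℝ) (hα : α ∈ Set.Ioo (1:ℝ) 2)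
    (hirr : Irrational α) (b ε : ℝ) (hb : 1 < b) (hε : 0 < ε)
    (hq : {q : ℕ | 0 < q ∧
        distNearestInt (α * q) < q * b ^ (-(q : ℝ) * Real.log q ^ (1 + ε))}.Infinite)
    (hρ : ρ ∈ Set.Ioo (0:ℝ) 1)
    (C : ℝ) (hC : 0 < C)
    (hj : ∀ j : ℕ, 1 ≤ j →
        distNearestInt (α * ρ + j * α) > C * (j : ℝ) ^ (-Real.log (Real.log (1 + j))))
    (h0 : 0 < distNearestInt (α * ρ)) :
    ∀ x : ℝ, 0 < x →
      (¬ BddAbove (Set.range fun n : ℕ => absA α ρ n * x ^ n)) ∧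
      ¬ Summable (fun n : ℕ => absA α ρ n * x ^ n) := by
  intro x hx
  obtain ⟨hα1, hα2⟩ := hα
  obtain ⟨hρ0, hρ1⟩ := hρ
  have hπ := Real.pi_pos
  have hS : 0 < Real.sin (π*ρ)/π := by
    apply div_pos _ hπ
    exact Real.sin_pos_of_pos_of_lt_pi (by positivity) (by nlinarith)
  have hc0 : 0 < |Real.sin (π*(α*ρ))| := by
    rw [abs_pos]; exact sin_pi_ne_zero_of_dist_pos h0
  have hK : 0 < Real.sin (π*ρ)/π * |Real.sin (π*(α*ρ))| / π := by positivity
  have growth : Filter.Tendsto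
      (fun q : ℕ => Real.sin (π*ρ)/π * |Real.sin (π*(α*ρ))| / π * Real.exp (Eaux b ε C x q))
      Filter.atTop Filter.atTop :=
    Filter.Tendsto.const_mul_atTop hK
      (Real.tendsto_exp_atTop.comp (Eaux_tendsto b ε C x hb hε hC))
  have unb : ¬ BddAbove (Set.range fun n : ℕ => absA α ρ n * x ^ n) := by
    rintro ⟨M, hM⟩
    obtain ⟨N, hN⟩ := Filter.eventually_atTop.mp (growth.eventually_gt_atTop M)
    obtain ⟨q, hqmem, hqgt⟩ := hq.exists_gt (max N 3)
    obtain ⟨hq0', hqd⟩ := hqmem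
    have hq3 : 3 ≤ q := le_of_lt (lt_of_le_of_lt (le_max_right N 3) hqgt)
    have h1 := key_bound hα1 hα2 hirr hb hρ0 hρ1 hC hj h0 hx hq3 hqd
    have h2 := hN q (le_of_lt (lt_of_le_of_lt (le_max_left N 3) hqgt))
    have h3 : absA α ρ q * x ^ q ≤ M := hM (Set.mem_range_self q)
    linarith
  exact ⟨unb, fun hs => unb hs.tendsto_atTop_zero.bddAbove_range⟩
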